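/- Let m, v ≥ 2 be integers. The multinomial coefficient (mv)! / (m!)^v, which counts balanced columns of length mv over a v-letter alphabet, equals the product C(mv, m) · C(m(v-1), m) · ⋯ · C(2m, m), and hence is strictly greater than (∏_{i=2}^{v} l(i)) · m^(-(v-1)/2) · v^(vm), where l(i) = (e^(15/16)/√(2π)) · ((i-1)/i)^(i-1). -/

import Mathlib

open Real Finset

/-- The constant `l(i)` in the lower bound on the central-type binomial coefficient. -/
noncomputable def lConst (i : ℕ) : ℝ :=
  Real.exp (15/16) / Real.sqrt (2 * π) * (((i : ℝ) - 1) / (i : ℝ)) ^ (i - 1)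

private lemma sqrtpi_le_stirlingSeq {n : ℕ} (hn : 1 ≤ n) : Real.sqrt π ≤ Stirling.stirlingSeq n := by
  obtain ⟨k, rfl⟩ := Nat.exists_eq_add_of_le hn
  have h := Stirling.stirlingSeq'_antitone.le_of_tendsto
    (Stirling.tendsto_stirlingSeq_sqrt_pi.comp (Filter.tendsto_add_atTop_nat 1)) k
  simpa [Function.comp, Nat.succ_eq_add_one, Nat.add_comm] using h

private lemma stirlingSeq_le_two {n : ℕ} (hn : 2 ≤ n) :
    Stirling.stirlingSeq n ≤ Real.exp 1 ^ 2 / 4 := by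
  obtain ⟨k, rfl⟩ := Nat.exists_eq_add_of_le hn
  have h : Stirling.stirlingSeq (1 + k + 1) ≤ Stirling.stirlingSeq 2 := by
    simpa [Function.comp] using Stirling.stirlingSeq'_antitone (Nat.le_add_right 1 k)
  have h2 : Stirling.stirlingSeq 2 = Real.exp 1 ^ 2 / 4 := by
    have hs4 : Real.sqrt (2 * ((2:ℕ):ℝ)) = 2 := by
      rw [show (2 * ((2:ℕ):ℝ) : ℝ) = 2 ^ 2 by norm_num, Real.sqrt_sq (by norm_num)]
    have he : Real.exp 1 ≠ 0 := (Real.exp_pos 1).ne'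
    rw [Stirling.stirlingSeq, hs4, div_pow]
    rw [show (Nat.factorial 2 : ℝ) = 2 by norm_num [Nat.factorial]]
    rw [show (((2:ℕ)):ℝ) ^ 2 = 4 by norm_num]
    field_simp
  rw [show 2 + k = 1 + k + 1 by omega, ← h2]
  exact h

private lemma stirling_lower {n : ℕ} (hn : 1 ≤ n) :
    Real.sqrt π * (Real.sqrt (2 * n) * ((n : ℝ) / Real.exp 1) ^ n) ≤ n.factorial := by
  have hpos : 0 < Real.sqrt (2 * n) * ((n : ℝ) / Real.exp 1) ^ n := by
    have hn0 : (0:ℝ) < n := by exact_mod_cast hn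
    positivity
  have h := sqrtpi_le_stirlingSeq hn
  rw [Stirling.stirlingSeq, le_div_iff₀ hpos] at h
  linarith

private lemma stirling_upper {n : ℕ} (hn : 2 ≤ n) :
    (n.factorial : ℝ) ≤ Real.exp 1 ^ 2 / 4 * (Real.sqrt (2 * n) * ((n : ℝ) / Real.exp 1) ^ n) := by
  have hpos : 0 < Real.sqrt (2 * n) * ((n : ℝ) / Real.exp 1) ^ n := by
    have hn0 : (0:ℝ) < n := by exact_mod_cast (by omega : 0 < n)
    positivity
  have h := stirlingSeq_le_two hn
  rw [Stirling.stirlingSeq, div_le_iff₀ hpos] at h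
  linarith

private lemma fact_eq (m : ℕ) : ∀ v : ℕ, 1 ≤ v →
    ((m * v).factorial : ℝ) =
      (∏ i ∈ Finset.Icc 2 v, ((m * i).choose m : ℝ)) * (m.factorial : ℝ) ^ v := by
  intro v hv
  induction v, hv using Nat.le_induction with
  | base => simp
  | succ v hv ih =>
    have hkey : (m * v + m).choose m * (m * v).factorial * m.factorial = (m * v + m).factorial :=
      Nat.add_choose_mul_factorial_mul_factorial (m * v) m
    have hmv : m * (v + 1) = m * v + m := by ring
    rw [Finset.prod_Icc_succ_top (by omega), hmv]
    have : ((m * v + m).factorial : ℝ)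
        = ((m * v + m).choose m : ℝ) * ((m * v).factorial : ℝ) * (m.factorial : ℝ) := by
      exact_mod_cast congrArg (Nat.cast : ℕ → ℝ) hkey.symm
    rw [this, ih]
    rw [show m * v + m = m * (v+1) by ring]
    ring

private lemma prod_lConst : ∀ v : ℕ, 1 ≤ v →
    ∏ i ∈ Finset.Icc 2 v, lConst i =
      (Real.exp (15/16) / Real.sqrt (2 * π)) ^ (v - 1) * ((v.factorial : ℝ) / (v : ℝ) ^ v) := by
  intro v hv
  induction v, hv using Nat.le_induction with
  | base => simp
  | succ v hv ih =>
    rw [Finset.prod_Icc_succ_top (by omega), ih]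
    have hV : (0:ℝ) < (v:ℝ) := by exact_mod_cast (by omega : 0 < v)
    have hV1 : (0:ℝ) < (v:ℝ) + 1 := by positivity
    have hl : lConst (v + 1)
        = Real.exp (15/16) / Real.sqrt (2 * π) * ((v : ℝ) / ((v:ℝ) + 1)) ^ v := by
      rw [lConst]
      push_cast
      norm_num
    rw [hl]
    rw [show (v + 1) - 1 = (v - 1) + 1 by omega]
    rw [pow_succ]
    have hfact : ((v+1).factorial : ℝ) = ((v:ℝ) + 1) * (v.factorial : ℝ) := by
      rw [Nat.factorial_succ]; push_cast; ring
    rw [hfact]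
    push_cast
    field_simp
    have hX : ((1:ℝ) + v)⁻¹ ^ v * (1 + v) ^ v = 1 := by
      rw [← mul_pow, inv_mul_cancel₀ (by positivity), one_pow]
    linear_combination ((v:ℝ) * (v:ℝ) ^ v + (v:ℝ) ^ v) * hX

private lemma key_numeric1 : Real.exp (79/16) < 32 * Real.sqrt 2 * π := by
  have h1 : Real.exp (79/16) * (17/16 : ℝ) ≤ Real.exp (79/16) * Real.exp (1/16) := by
    have := Real.add_one_le_exp (1/16 : ℝ)
    nlinarith [Real.exp_pos (79/16 : ℝ)]
  have h2 : Real.exp (79/16) * Real.exp (1/16) = Real.exp 1 ^ 5 := by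
    rw [← Real.exp_add, Real.exp_one_pow]
    try norm_num
  have h3 : Real.exp 1 ^ 5 < 2.7182818286 ^ 5 :=
    pow_lt_pow_left₀ Real.exp_one_lt_d9 (Real.exp_pos 1).le (by norm_num)
  have hs : (1.414213 : ℝ) < Real.sqrt 2 := by
    apply Real.lt_sqrt_of_sq_lt
    norm_num
  have hπ : (3.141592 : ℝ) < π := Real.pi_gt_d6
  have e1 : Real.exp (79/16) ≤ 2.7182818286 ^ 5 * 16/17 := by linarith
  have e2 : (2.7182818286 : ℝ) ^ 5 * 16/17 < 32 * 1.414213 * 3.141592 := by norm_num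
  have e3 : (32 : ℝ) * 1.414213 * 3.141592 ≤ 32 * Real.sqrt 2 * π := by
    have := hs.le
    have := hπ.le
    gcongr <;> norm_num [hs.le]
  linarith

private lemma key_numeric2 : Real.exp (31/16) ≤ 4 * Real.sqrt π := by
  have h1 : Real.exp (31/16) * (17/16 : ℝ) ≤ Real.exp (31/16) * Real.exp (1/16) := by
    have := Real.add_one_le_exp (1/16 : ℝ)
    nlinarith [Real.exp_pos (31/16 : ℝ)]
  have h2 : Real.exp (31/16) * Real.exp (1/16) = Real.exp 1 ^ 2 := by
    rw [← Real.exp_add, Real.exp_one_pow]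
    try norm_num
  have h3 : Real.exp 1 ^ 2 < 2.7182818286 ^ 2 :=
    pow_lt_pow_left₀ Real.exp_one_lt_d9 (Real.exp_pos 1).le (by norm_num)
  have hs : (1.772453 : ℝ) < Real.sqrt π := by
    have hπ : (3.141592 : ℝ) < π := Real.pi_gt_d6
    apply Real.lt_sqrt_of_sq_lt
    nlinarith
  have e1 : Real.exp (31/16) ≤ 2.7182818286 ^ 2 * 16/17 := by linarith
  have e2 : (2.7182818286 : ℝ) ^ 2 * 16/17 < 4 * 1.772453 := by norm_num
  linarith

private lemma key_ineq : ∀ v : ℕ, 2 ≤ v →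
    (Real.exp (15/16) / Real.sqrt (2 * π)) ^ (v - 1) * (Real.exp 1 ^ 2 / 4)
        * (Real.exp 1 ^ 2 / 4 * Real.sqrt 2) ^ v
      < Real.sqrt π * Real.exp 1 ^ v := by
  have hsπ : (0:ℝ) < Real.sqrt π := Real.sqrt_pos.mpr Real.pi_pos
  have hs2 : (0:ℝ) < Real.sqrt 2 := Real.sqrt_pos.mpr (by norm_num)
  have hs2sq : Real.sqrt 2 ^ 2 = 2 := Real.sq_sqrt (by norm_num)
  have hsπsq : Real.sqrt π ^ 2 = π := Real.sq_sqrt Real.pi_pos.le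
  have hE : (0:ℝ) < Real.exp 1 := Real.exp_pos 1
  have hA : (0:ℝ) < Real.exp (15/16) := Real.exp_pos _
  have h2π : Real.sqrt (2 * π) = Real.sqrt 2 * Real.sqrt π := Real.sqrt_mul (by norm_num) π
  have hbt : Real.exp (15/16) / Real.sqrt (2 * π) * (Real.exp 1 ^ 2 / 4 * Real.sqrt 2)
      ≤ Real.exp 1 := by
    have h := key_numeric2
    have hexp : Real.exp (15/16) * Real.exp 1 ^ 2 = Real.exp (31/16) * Real.exp 1 := by
      rw [show (31:ℝ)/16 = 15/16 + 1 by norm_num, Real.exp_add]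
      ring
    rw [h2π, div_mul_eq_mul_div, div_le_iff₀ (by positivity)]
    calc Real.exp (15/16) * (Real.exp 1 ^ 2 / 4 * Real.sqrt 2)
        = Real.exp (15/16) * Real.exp 1 ^ 2 * Real.sqrt 2 / 4 := by ring
      _ = Real.exp (31/16) * Real.exp 1 * Real.sqrt 2 / 4 := by rw [hexp]
      _ ≤ (4 * Real.sqrt π) * Real.exp 1 * Real.sqrt 2 / 4 := by gcongr
      _ = Real.exp 1 * (Real.sqrt 2 * Real.sqrt π) := by ring
  have hexp79 : Real.exp (15/16) * Real.exp 1 ^ 6 = Real.exp (79/16) * Real.exp 1 ^ 2 := by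
    rw [show (79:ℝ)/16 = 15/16 + 4 by norm_num, Real.exp_add,
      show Real.exp (4:ℝ) = Real.exp 1 ^ 4 by
        rw [Real.exp_one_pow]; norm_num]
    ring
  intro v hv
  induction v, hv using Nat.le_induction with
  | base =>
    rw [h2π, show (2:ℕ) - 1 = 1 by norm_num, pow_one, div_mul_eq_mul_div,
      div_mul_eq_mul_div, div_lt_iff₀ (by positivity)]
    have e1 : Real.exp (15/16) * (Real.exp 1 ^ 2 / 4) * (Real.exp 1 ^ 2 / 4 * Real.sqrt 2) ^ 2
        = Real.exp (79/16) * Real.exp 1 ^ 2 / 32 := by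
      rw [mul_pow, hs2sq, ← hexp79]
      ring
    have e2 : Real.sqrt π * Real.exp 1 ^ 2 * (Real.sqrt 2 * Real.sqrt π)
        = Real.sqrt 2 * π * Real.exp 1 ^ 2 := by
      linear_combination Real.sqrt 2 * Real.exp 1 ^ 2 * hsπsq
    rw [e1, e2]
    nlinarith [mul_lt_mul_of_pos_right key_numeric1 (pow_pos hE 2)]
  | succ v hv ih =>
    have hstep : (Real.exp (15/16) / Real.sqrt (2 * π)) ^ (v + 1 - 1) * (Real.exp 1 ^ 2 / 4)
        * (Real.exp 1 ^ 2 / 4 * Real.sqrt 2) ^ (v + 1)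
        = ((Real.exp (15/16) / Real.sqrt (2 * π)) ^ (v - 1) * (Real.exp 1 ^ 2 / 4)
            * (Real.exp 1 ^ 2 / 4 * Real.sqrt 2) ^ v)
          * (Real.exp (15/16) / Real.sqrt (2 * π) * (Real.exp 1 ^ 2 / 4 * Real.sqrt 2)) := by
      rw [show v + 1 - 1 = (v - 1) + 1 by omega, pow_succ, pow_succ]
      ring
    rw [hstep]
    have hpos : (0:ℝ) < Real.exp (15/16) / Real.sqrt (2 * π) * (Real.exp 1 ^ 2 / 4 * Real.sqrt 2) := by
      rw [h2π]; positivity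
    calc ((Real.exp (15/16) / Real.sqrt (2 * π)) ^ (v - 1) * (Real.exp 1 ^ 2 / 4)
            * (Real.exp 1 ^ 2 / 4 * Real.sqrt 2) ^ v)
          * (Real.exp (15/16) / Real.sqrt (2 * π) * (Real.exp 1 ^ 2 / 4 * Real.sqrt 2))
        < (Real.sqrt π * Real.exp 1 ^ v)
          * (Real.exp (15/16) / Real.sqrt (2 * π) * (Real.exp 1 ^ 2 / 4 * Real.sqrt 2)) := by
          exact mul_lt_mul_of_pos_right ih hpos
      _ ≤ (Real.sqrt π * Real.exp 1 ^ v) * Real.exp 1 := by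
          apply mul_le_mul_of_nonneg_left hbt (by positivity)
      _ = Real.sqrt π * Real.exp 1 ^ (v + 1) := by rw [pow_succ]; ring

theorem multinomial_balanced_columns (m v : ℕ) (hm : 2 ≤ m) (hv : 2 ≤ v) :
    ((m * v).factorial : ℝ) / ((m.factorial : ℝ)) ^ v =
      ∏ i ∈ Finset.Icc 2 v, ((m * i).choose m : ℝ) ∧
    (∏ i ∈ Finset.Icc 2 v, lConst i) * (m : ℝ) ^ (-((v : ℝ) - 1) / 2) * (v : ℝ) ^ (v * m) <
      ((m * v).factorial : ℝ) / ((m.factorial : ℝ)) ^ v := by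
  have hfe := fact_eq m v (by omega)
  have hfacne : ((m.factorial : ℝ)) ^ v ≠ 0 := by positivity
  constructor
  · rw [hfe, mul_div_cancel_right₀ _ hfacne]
  · -- notation
    set M : ℝ := (m : ℝ) with hMdef
    set V : ℝ := (v : ℝ) with hVdef
    have hM : (0:ℝ) < M := by rw [hMdef]; exact_mod_cast (by omega : 0 < m)
    have hV : (0:ℝ) < V := by rw [hVdef]; exact_mod_cast (by omega : 0 < v)
    set s : ℝ := Real.sqrt M with hsdef
    have hs : 0 < s := Real.sqrt_pos.mpr hM
    have hE : (0:ℝ) < Real.exp 1 := Real.exp_pos 1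
    set b : ℝ := Real.exp (15/16) / Real.sqrt (2 * π) with hbdef
    have hb : 0 < b := by
      rw [hbdef]
      have : (0:ℝ) < Real.sqrt (2*π) := Real.sqrt_pos.mpr (by positivity)
      positivity
    set c : ℝ := Real.exp 1 ^ 2 / 4 with hcdef
    have hc : 0 < c := by positivity
    have hs2 : (0:ℝ) < Real.sqrt 2 := Real.sqrt_pos.mpr (by norm_num)
    have hsV : (0:ℝ) < Real.sqrt V := Real.sqrt_pos.mpr hV
    -- rpow to sqrt powers
    have hMr : M ^ (-(V - 1) / 2) = s / s ^ v := by
      have e1 : M ^ (-(V - 1) / 2) = M ^ ((1:ℝ)/2) / M ^ (V / 2) := by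
        rw [← Real.rpow_sub hM]
        congr 1
        ring
      have e2 : M ^ (V / 2) = s ^ v := by
        rw [show V / 2 = (1:ℝ)/2 * V by ring, Real.rpow_mul hM.le, hVdef,
          Real.rpow_natCast, hsdef, Real.sqrt_eq_rpow]
      rw [e1, e2, hsdef, Real.sqrt_eq_rpow]
    have hGpos : 0 < Real.sqrt V * (s / s ^ v) * V ^ (v * m) :=
      mul_pos (mul_pos hsV (div_pos hs (pow_pos hs v))) (pow_pos hV _)
    have hsplit2V : Real.sqrt (2 * V) = Real.sqrt 2 * Real.sqrt V := Real.sqrt_mul (by norm_num) V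
    have hsplit2M : Real.sqrt (2 * M) = Real.sqrt 2 * s := Real.sqrt_mul (by norm_num) M
    have hVne : V ≠ 0 := hV.ne'
    have hEne : Real.exp 1 ≠ 0 := hE.ne'
    have hsne : s ≠ 0 := hs.ne'
    calc (∏ i ∈ Finset.Icc 2 v, lConst i) * M ^ (-(V - 1) / 2) * V ^ (v * m)
        = b ^ (v - 1) * ((v.factorial : ℝ) / V ^ v) * (s / s ^ v) * V ^ (v * m) := by
          rw [prod_lConst v (by omega), hMr]
      _ ≤ b ^ (v - 1) * (c * (Real.sqrt (2 * v) * (V / Real.exp 1) ^ v) / V ^ v)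
            * (s / s ^ v) * V ^ (v * m) := by
          gcongr
          exact stirling_upper hv
      _ = (b ^ (v - 1) * c * Real.sqrt 2 / Real.exp 1 ^ v)
            * (Real.sqrt V * (s / s ^ v) * V ^ (v * m)) := by
          rw [show ((v:ℝ)) = V from rfl, hsplit2V]
          field_simp
          have hX : Real.exp 1 ^ v * (Real.exp 1)⁻¹ ^ v = 1 := by
            rw [← mul_pow, mul_inv_cancel₀ hEne, one_pow]
          linear_combination V ^ v * hX
      _ < (Real.sqrt π * Real.sqrt 2 / (c * Real.sqrt 2) ^ v)
            * (Real.sqrt V * (s / s ^ v) * V ^ (v * m)) := by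
          apply mul_lt_mul_of_pos_right _ hGpos
          rw [div_lt_div_iff₀ (by positivity) (by positivity)]
          have hk := key_ineq v hv
          calc b ^ (v - 1) * c * Real.sqrt 2 * (c * Real.sqrt 2) ^ v
              = (b ^ (v - 1) * c * (c * Real.sqrt 2) ^ v) * Real.sqrt 2 := by ring
            _ < (Real.sqrt π * Real.exp 1 ^ v) * Real.sqrt 2 :=
                mul_lt_mul_of_pos_right hk hs2
            _ = Real.sqrt π * Real.sqrt 2 * Real.exp 1 ^ v := by ring
      _ = Real.sqrt π * (Real.sqrt (2 * (M * V)) * ((M * V) / Real.exp 1) ^ (m * v))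
            / (c * (Real.sqrt (2 * M) * (M / Real.exp 1) ^ m)) ^ v := by
          rw [Real.sqrt_mul (by norm_num) (M * V), Real.sqrt_mul hM.le V, hsplit2M]
          rw [show M * V / Real.exp 1 = (M / Real.exp 1) * V by ring]
          rw [mul_pow (M / Real.exp 1) V (m * v), show (M / Real.exp 1) ^ (m * v)
            = ((M / Real.exp 1) ^ m) ^ v from by rw [← pow_mul], show V ^ (m * v) = V ^ (v * m)
            from by rw [Nat.mul_comm]]
          rw [mul_pow, mul_pow]
          field_simp
          ring
      _ ≤ ((m * v).factorial : ℝ) / ((m.factorial : ℝ)) ^ v := by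
          have h1 := stirling_lower (n := m * v)
            (Nat.one_le_iff_ne_zero.mpr (Nat.mul_ne_zero (by omega) (by omega)))
          have hcast : ((m * v : ℕ) : ℝ) = M * V := by rw [hMdef, hVdef]; push_cast; ring
          rw [hcast] at h1
          have h2 : ((m.factorial : ℝ)) ^ v
              ≤ (c * (Real.sqrt (2 * M) * (M / Real.exp 1) ^ m)) ^ v :=
            pow_le_pow_left₀ (by positivity) (stirling_upper hm) v
          exact div_le_div₀ (by positivity) h1 (by positivity) h2
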